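/- For each fixed α ∈ (0,1), K ∈ ℕ, and 0 < δ < 1, the space B_{K,δ} of (equivalence classes of) L¹ functions on I_α = [α−1,α] admitting a representative g with sup_{k ≥ K} ( k^{−δ} var_{L_k} g + ∫_{L_k} |g| dx ) < ∞ is a Banach space under the norm ‖f‖_{K,δ} = inf over versions g of that quantity. -/

import Mathlib

open Set MeasureTheory
open scoped ENNReal

open Filter

lemma evar_sub_le (g h : ℝ → ℝ) (s : Set ℝ) :
    eVariationOn (fun x => g x - h x) s ≤ eVariationOn g s + eVariationOn h s := by
  refine iSup_le ?_
  rintro ⟨n, u, hu, us⟩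
  calc ∑ i ∈ Finset.range n, edist (g (u (i+1)) - h (u (i+1))) (g (u i) - h (u i))
      ≤ ∑ i ∈ Finset.range n,
          (edist (g (u (i+1))) (g (u i)) + edist (h (u (i+1))) (h (u i))) := by
        refine Finset.sum_le_sum fun i _ => ?_
        rw [edist_dist, edist_dist, edist_dist]
        refine le_trans (ENNReal.ofReal_le_ofReal (dist_sub_sub_le _ _ _ _)) ?_
        rw [ENNReal.ofReal_add dist_nonneg dist_nonneg]
    _ = (∑ i ∈ Finset.range n, edist (g (u (i+1))) (g (u i)))
          + ∑ i ∈ Finset.range n, edist (h (u (i+1))) (h (u i)) :=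
        Finset.sum_add_distrib
    _ ≤ eVariationOn g s + eVariationOn h s :=
        add_le_add (eVariationOn.sum_le (f := g) hu us) (eVariationOn.sum_le (f := h) hu us)

lemma evar_le_of_tendsto {G : ℕ → ℝ → ℝ} {g : ℝ → ℝ} {s : Set ℝ} {B : ℝ≥0∞}
    (h : ∀ x ∈ s, Tendsto (fun n => G n x) atTop (nhds (g x)))
    (hB : ∀ᶠ n in atTop, eVariationOn (G n) s ≤ B) :
    eVariationOn g s ≤ B := by
  by_contra hc
  push_neg at hc
  obtain ⟨n, h1, h2⟩ := ((eVariationOn.lowerSemicontinuous_aux h hc).and hB).exists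
  exact absurd (h1.trans_le h2) (lt_irrefl B)

lemma bv_integrable {g : ℝ → ℝ} {c d : ℝ} (h : BoundedVariationOn g (Icc c d)) :
    IntegrableOn g (Icc c d) := by
  obtain ⟨p, q, hp, hq, hpq⟩ := h.locallyBoundedVariationOn.exists_monotoneOn_sub_monotoneOn
  rw [hpq]
  exact (hp.integrableOn_isCompact isCompact_Icc).sub (hq.integrableOn_isCompact isCompact_Icc)

/-- The `(K,δ)`-norm of a function on `I_α = [α-1, α]`:
`sup_{k ≥ K} ( k^{-δ} var_{L_k} g + ∫_{L_k} |g| )`, where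
`L_k = [α-1, -1/(k+α)] ∪ [1/(k+α), α]`. -/
noncomputable def kdNorm (α : ℝ) (K : ℕ) (δ : ℝ) (g : ℝ → ℝ) : ℝ≥0∞ :=
  ⨆ k : ℕ, ⨆ _ : K ≤ k,
    (ENNReal.ofReal ((k : ℝ) ^ (-δ)) *
        (eVariationOn g (Icc (1 / (k + α)) α) + eVariationOn g (Icc (α - 1) (-(1 / (k + α))))) +
      ENNReal.ofReal (∫ x in Icc (α - 1) (-(1 / (k + α))) ∪ Icc (1 / (k + α)) α, |g x|))

/-- the space `B_{K,δ}` is complete (hence a Banach space): every Cauchy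
sequence for the `(K,δ)`-norm converges in that norm to an element of finite norm. -/
theorem BKdelta_complete (α : ℝ) (hα : α ∈ Ioo (0:ℝ) 1) (K : ℕ) (hK : 1 ≤ K)
    (δ : ℝ) (hδ : δ ∈ Ioo (0:ℝ) 1)
    (f : ℕ → ℝ → ℝ) (hfin : ∀ n, kdNorm α K δ (f n) < ⊤)
    (hcauchy : ∀ ε : ℝ, 0 < ε → ∃ N, ∀ m ≥ N, ∀ n ≥ N,
      kdNorm α K δ (fun x => f m x - f n x) ≤ ENNReal.ofReal ε) :
    ∃ F : ℝ → ℝ, kdNorm α K δ F < ⊤ ∧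
      Filter.Tendsto (fun n => kdNorm α K δ (fun x => f n x - F x))
        Filter.atTop (nhds 0) := by
  classical
  obtain ⟨hα0, hα1⟩ := hα
  obtain ⟨hδ0, hδ1⟩ := hδ
  set a : ℕ → ℝ := fun k => 1 / ((k : ℝ) + α) with ha
  have ha_pos : ∀ k : ℕ, 0 < a k := fun k => by
    have : (0:ℝ) ≤ (k:ℝ) := Nat.cast_nonneg k
    simp only [ha]; positivity
  have ha_anti : ∀ k : ℕ, a (k+1) < a k := fun k => by
    have h1 : (0:ℝ) < (k:ℝ) + α := by have := Nat.cast_nonneg (α := ℝ) k; linarith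
    simp only [ha]
    apply one_div_lt_one_div_of_lt h1
    push_cast; linarith
  set R : ℕ → Set ℝ := fun k => Icc (a k) α with hR
  set L : ℕ → Set ℝ := fun k => Icc (α - 1) (-(a k)) with hL
  set S : ℕ → Set ℝ := fun k => L k ∪ R k with hS
  set T : (ℝ → ℝ) → ℕ → ℝ≥0∞ := fun g k =>
    ENNReal.ofReal ((k : ℝ) ^ (-δ)) * (eVariationOn g (R k) + eVariationOn g (L k)) +
      ENNReal.ofReal (∫ x in S k, |g x|) with hT
  have hkd : ∀ g, kdNorm α K δ g = ⨆ k, ⨆ _ : K ≤ k, T g k := fun g => rfl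
  have hSmeas : ∀ k, MeasurableSet (S k) := fun k => measurableSet_Icc.union measurableSet_Icc
  have hSsub : ∀ k, S k ⊆ Icc (α - 1) α := by
    intro k y hy
    rcases hy with hy | hy
    · exact ⟨hy.1, hy.2.trans (by nlinarith [ha_pos k])⟩
    · exact ⟨le_trans (by nlinarith [ha_pos k]) hy.1, hy.2⟩
  have hSfin : ∀ k, volume (S k) < ⊤ := fun k =>
    lt_of_le_of_lt (measure_mono (hSsub k)) (by rw [Real.volume_Icc]; exact ENNReal.ofReal_lt_top)
  have hTle : ∀ g k, K ≤ k → T g k ≤ kdNorm α K δ g := by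
    intro g k hk
    rw [hkd]
    exact le_iSup_of_le k (le_iSup_of_le hk le_rfl)
  have hkdle : ∀ (g : ℝ → ℝ) (M : ℝ≥0∞), (∀ k, K ≤ k → T g k ≤ M) → kdNorm α K δ g ≤ M := by
    intro g M h
    rw [hkd]
    exact iSup_le fun k => iSup_le fun hk => h k hk
  have hc_pos : ∀ k : ℕ, K ≤ k → 0 < ((k:ℝ) ^ (-δ)) := by
    intro k hk
    have : (0:ℝ) < k := by exact_mod_cast lt_of_lt_of_le hK hk
    positivity
  have hck0 : ∀ k : ℕ, K ≤ k → ENNReal.ofReal ((k:ℝ) ^ (-δ)) ≠ 0 := fun k hk =>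
    (ENNReal.ofReal_pos.mpr (hc_pos k hk)).ne'
  have hcktop : ∀ k : ℕ, ENNReal.ofReal ((k:ℝ) ^ (-δ)) ≠ ⊤ := fun k => ENNReal.ofReal_ne_top
  -- extraction of the three component bounds from `T g k ≤ M`
  have extract : ∀ (g : ℝ → ℝ) (k : ℕ), K ≤ k → ∀ M : ℝ≥0∞, T g k ≤ M →
      eVariationOn g (R k) ≤ M / ENNReal.ofReal ((k:ℝ) ^ (-δ)) ∧
      eVariationOn g (L k) ≤ M / ENNReal.ofReal ((k:ℝ) ^ (-δ)) ∧
      ENNReal.ofReal (∫ x in S k, |g x|) ≤ M := by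
    intro g k hk M h
    have h1 : ENNReal.ofReal ((k:ℝ) ^ (-δ)) *
        (eVariationOn g (R k) + eVariationOn g (L k)) ≤ M := le_trans le_self_add h
    have h2 : ENNReal.ofReal (∫ x in S k, |g x|) ≤ M := le_trans le_add_self h
    refine ⟨?_, ?_, h2⟩ <;>
      rw [ENNReal.le_div_iff_mul_le (Or.inl (hck0 k hk)) (Or.inl (hcktop k))] <;>
      rw [mul_comm] <;>
      refine le_trans (mul_le_mul_right ?_ _) h1
    · exact le_self_add
    · exact le_add_self
  have hdivtoReal : ∀ (k : ℕ), K ≤ k → ∀ M : ℝ≥0∞,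
      (M / ENNReal.ofReal ((k:ℝ) ^ (-δ))).toReal = M.toReal * (k:ℝ) ^ δ := by
    intro k hk M
    rw [ENNReal.toReal_div, ENNReal.toReal_ofReal (hc_pos k hk).le,
      Real.rpow_neg (Nat.cast_nonneg k), div_eq_mul_inv, inv_inv]
  -- pointwise sup bound on an interval component
  have sub : ∀ (g : ℝ → ℝ) (j : ℕ), K ≤ j → IntegrableOn g (S j) volume →
      kdNorm α K δ g ≠ ⊤ → ∀ c d : ℝ, c < d → (Icc c d = R j ∨ Icc c d = L j) →
      ∀ x ∈ Icc c d, |g x| ≤ (kdNorm α K δ g).toReal * ((j:ℝ) ^ δ + 1/(d - c)) := by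
    intro g j hj hint hfintop c d hcd hcase x hx
    obtain ⟨hI1, hI2, hI3⟩ := extract g j hj _ (hTle g j hj)
    have hVle : eVariationOn g (Icc c d) ≤ kdNorm α K δ g / ENNReal.ofReal ((j:ℝ) ^ (-δ)) := by
      rcases hcase with h | h <;> rw [h] <;> assumption
    have hdivtop : kdNorm α K δ g / ENNReal.ofReal ((j:ℝ) ^ (-δ)) ≠ ⊤ :=
      (ENNReal.div_lt_top hfintop (hck0 j hj)).ne
    have hBV : BoundedVariationOn g (Icc c d) := fun h =>
      hdivtop (top_le_iff.mp (h ▸ hVle))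
    have hVreal : (eVariationOn g (Icc c d)).toReal ≤ (kdNorm α K δ g).toReal * (j:ℝ) ^ δ := by
      rw [← hdivtoReal j hj]
      exact ENNReal.toReal_mono hdivtop hVle
    have hsubset : Icc c d ⊆ S j := by
      rcases hcase with h | h <;> rw [h]
      · exact subset_union_right
      · exact subset_union_left
    have hint' : IntegrableOn g (Icc c d) := hint.mono_set hsubset
    have hIcc_le : (∫ y in Icc c d, |g y|) ≤ ∫ y in S j, |g y| :=
      setIntegral_mono_set hint.abs (ae_of_all _ fun y => abs_nonneg _)
        (HasSubset.Subset.eventuallyLE hsubset)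
    have hSint : (∫ y in S j, |g y|) ≤ (kdNorm α K δ g).toReal :=
      (ENNReal.ofReal_le_iff_le_toReal hfintop).mp hI3
    set V : ℝ := (eVariationOn g (Icc c d)).toReal with hV
    have hpt : ∀ y ∈ Icc c d, |g x| - V ≤ |g y| := by
      intro y hy
      have hd := hBV.dist_le hx hy
      rw [Real.dist_eq] at hd
      have h2 := abs_sub_abs_le_abs_sub (g x) (g y)
      linarith
    have hconst : (|g x| - V) * (d - c) ≤ ∫ y in Icc c d, |g y| := by
      have h0 : (∫ _ in Icc c d, (|g x| - V) ∂volume) = (|g x| - V) * (d - c) := by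
        rw [setIntegral_const, Real.volume_real_Icc_of_le (by linarith),
          smul_eq_mul, mul_comm]
      rw [← h0]
      refine setIntegral_mono_on ?_ hint'.abs measurableSet_Icc hpt
      exact (integrableOn_const_iff).mpr (Or.inr (by rw [Real.volume_Icc]; exact ENNReal.ofReal_lt_top))
    have hlen : (0:ℝ) < d - c := by linarith
    have hdiv : |g x| - V ≤ (∫ y in Icc c d, |g y|) / (d - c) := (le_div_iff₀ hlen).mpr hconst
    have hV0 : 0 ≤ V := ENNReal.toReal_nonneg
    have hfinal : (∫ y in Icc c d, |g y|) / (d - c) ≤ (kdNorm α K δ g).toReal / (d - c) := by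
      gcongr
      exact hIcc_le.trans hSint
    calc |g x| ≤ V + (∫ y in Icc c d, |g y|) / (d - c) := by linarith
      _ ≤ (kdNorm α K δ g).toReal * (j:ℝ) ^ δ + (kdNorm α K δ g).toReal / (d - c) := by
          exact add_le_add hVreal hfinal
      _ = (kdNorm α K δ g).toReal * ((j:ℝ) ^ δ + 1/(d - c)) := by ring
  -- each f n is BV and integrable on the pieces
  have hBVn : ∀ n k, K ≤ k →
      BoundedVariationOn (f n) (R k) ∧ BoundedVariationOn (f n) (L k) := by
    intro n k hk
    obtain ⟨h1, h2, _⟩ := extract (f n) k hk _ (hTle (f n) k hk)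
    have hfin' : kdNorm α K δ (f n) / ENNReal.ofReal ((k:ℝ) ^ (-δ)) < ⊤ :=
      ENNReal.div_lt_top (hfin n).ne (hck0 k hk)
    exact ⟨(h1.trans_lt hfin').ne, (h2.trans_lt hfin').ne⟩
  have hintn : ∀ n k, K ≤ k → IntegrableOn (f n) (S k) volume := by
    intro n k hk
    exact IntegrableOn.union (bv_integrable (hBVn n k hk).2) (bv_integrable (hBVn n k hk).1)
  -- subadditivity of T on differences
  have Tsub : ∀ (p q : ℝ → ℝ) (k : ℕ), IntegrableOn p (S k) volume →
      IntegrableOn q (S k) volume → T (fun x => p x - q x) k ≤ T p k + T q k := by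
    intro p q k hp hq
    have hev1 := evar_sub_le p q (R k)
    have hev2 := evar_sub_le p q (L k)
    have hintle : (∫ x in S k, |p x - q x|) ≤ (∫ x in S k, |p x|) + ∫ x in S k, |q x| := by
      rw [← integral_add hp.abs hq.abs]
      exact integral_mono (hp.sub hq).abs (hp.abs.add hq.abs) fun x => abs_sub _ _
    show ENNReal.ofReal ((k:ℝ) ^ (-δ)) *
        (eVariationOn (fun x => p x - q x) (R k) + eVariationOn (fun x => p x - q x) (L k)) +
        ENNReal.ofReal (∫ x in S k, |p x - q x|) ≤ T p k + T q k
    calc ENNReal.ofReal ((k:ℝ) ^ (-δ)) *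
          (eVariationOn (fun x => p x - q x) (R k) + eVariationOn (fun x => p x - q x) (L k)) +
          ENNReal.ofReal (∫ x in S k, |p x - q x|)
        ≤ ENNReal.ofReal ((k:ℝ) ^ (-δ)) *
            ((eVariationOn p (R k) + eVariationOn q (R k)) +
              (eVariationOn p (L k) + eVariationOn q (L k))) +
            (ENNReal.ofReal (∫ x in S k, |p x|) + ENNReal.ofReal (∫ x in S k, |q x|)) := by
          gcongr
          exact le_trans (ENNReal.ofReal_le_ofReal hintle) ENNReal.ofReal_add_le
      _ = T p k + T q k := by
          show _ = ENNReal.ofReal ((k:ℝ) ^ (-δ)) *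
              (eVariationOn p (R k) + eVariationOn p (L k)) +
              ENNReal.ofReal (∫ x in S k, |p x|) +
              (ENNReal.ofReal ((k:ℝ) ^ (-δ)) *
                (eVariationOn q (R k) + eVariationOn q (L k)) +
                ENNReal.ofReal (∫ x in S k, |q x|))
          ring
  have hkd_sub_fin : ∀ m n, kdNorm α K δ (fun x => f m x - f n x) ≠ ⊤ := by
    intro m n
    refine ne_top_of_le_ne_top ?_ (hkdle _ (kdNorm α K δ (f m) + kdNorm α K δ (f n))
      (fun k hk => (Tsub (f m) (f n) k (hintn m k hk) (hintn n k hk)).trans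
        (add_le_add (hTle _ k hk) (hTle _ k hk))))
    exact (ENNReal.add_lt_top.mpr ⟨hfin m, hfin n⟩).ne
  have hintd : ∀ m n k, K ≤ k → IntegrableOn (fun x => f m x - f n x) (S k) volume :=
    fun m n k hk => (hintn m k hk).sub (hintn n k hk)
  -- the uniform constant
  set Cst : ℕ → ℝ := fun k =>
    ((k:ℝ)+1) ^ δ + max (1/(α - a (k+1))) 0 + max (1/((1-α) - a (k+1))) 0 with hCstdef
  have hCst_pos : ∀ k, 0 < Cst k := by
    intro k
    have h1 : (0:ℝ) < ((k:ℝ)+1) ^ δ := Real.rpow_pos_of_pos (by positivity) _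
    have h2 := le_max_right (1/(α - a (k+1))) (0:ℝ)
    have h3 := le_max_right (1/((1-α) - a (k+1))) (0:ℝ)
    simp only [hCstdef]
    linarith
  -- key pointwise bound
  have key : ∀ m n k, K ≤ k → ∀ x ∈ S k,
      |f m x - f n x| ≤ (kdNorm α K δ (fun y => f m y - f n y)).toReal * Cst k := by
    intro m n k hk x hx
    have hk1 : K ≤ k + 1 := hk.trans (Nat.le_succ k)
    have hM0 : (0:ℝ) ≤ (kdNorm α K δ (fun y => f m y - f n y)).toReal := ENNReal.toReal_nonneg
    have hcast : ((k+1:ℕ):ℝ) = (k:ℝ)+1 := by push_cast; ring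
    rcases hx with hxL | hxR
    · have hxI : x ∈ Icc (α - 1) (-(a (k+1))) :=
        ⟨hxL.1, hxL.2.trans (by linarith [ha_anti k])⟩
      have hcd : α - 1 < -(a (k+1)) := by
        have h1 := hxL.1; have h2 := hxL.2; have h3 := ha_anti k; linarith
      have hb := sub _ (k+1) hk1 (hintd m n (k+1) hk1) (hkd_sub_fin m n)
        (α - 1) (-(a (k+1))) hcd (Or.inr rfl) x hxI
      refine hb.trans (mul_le_mul_of_nonneg_left ?_ hM0)
      rw [hcast]
      have heq : -(a (k+1)) - (α - 1) = (1-α) - a (k+1) := by ring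
      rw [heq]
      have h1 : 1/((1-α) - a (k+1)) ≤ max (1/((1-α) - a (k+1))) 0 := le_max_left _ _
      have h2 : (0:ℝ) ≤ max (1/(α - a (k+1))) 0 := le_max_right _ _
      simp only [hCstdef]
      linarith
    · have hxI : x ∈ Icc (a (k+1)) α := ⟨(ha_anti k).le.trans hxR.1, hxR.2⟩
      have hcd : a (k+1) < α := lt_of_lt_of_le (ha_anti k) (hxR.1.trans hxR.2)
      have hb := sub _ (k+1) hk1 (hintd m n (k+1) hk1) (hkd_sub_fin m n)
        (a (k+1)) α hcd (Or.inl rfl) x hxI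
      refine hb.trans (mul_le_mul_of_nonneg_left ?_ hM0)
      rw [hcast]
      have h1 : 1/(α - a (k+1)) ≤ max (1/(α - a (k+1))) 0 := le_max_left _ _
      have h2 : (0:ℝ) ≤ max (1/((1-α) - a (k+1))) 0 := le_max_right _ _
      simp only [hCstdef]
      linarith
  have hcauchy' : ∀ ε : ℝ, 0 < ε → ∃ N, ∀ m ≥ N, ∀ n ≥ N,
      (kdNorm α K δ (fun x => f m x - f n x)).toReal ≤ ε := by
    intro ε hε
    obtain ⟨N, hN⟩ := hcauchy ε hε
    refine ⟨N, fun m hm n hn => ?_⟩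
    refine le_trans (ENNReal.toReal_mono ENNReal.ofReal_ne_top (hN m hm n hn)) ?_
    rw [ENNReal.toReal_ofReal hε.le]
  have hcs : ∀ k, K ≤ k → ∀ x ∈ S k, CauchySeq (fun n => f n x) := by
    intro k hk x hx
    rw [Metric.cauchySeq_iff]
    intro ε hε
    obtain ⟨N, hN⟩ := hcauchy' (ε / (2 * Cst k)) (by positivity)
    refine ⟨N, fun m hm n hn => ?_⟩
    rw [Real.dist_eq]
    have h1 := key m n k hk x hx
    have h2 := mul_le_mul_of_nonneg_right (hN m hm n hn) (hCst_pos k).le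
    have h3 : ε / (2 * Cst k) * Cst k = ε / 2 := by
      rw [div_mul_eq_mul_div, mul_div_mul_right _ _ (hCst_pos k).ne']
    calc |f m x - f n x| ≤ _ := h1
      _ ≤ ε / (2 * Cst k) * Cst k := h2
      _ < ε := by rw [h3]; linarith
  set F : ℝ → ℝ := fun x =>
    if h : ∃ l, Tendsto (fun n => f n x) atTop (nhds l) then h.choose else 0 with hFdef
  have hFlim : ∀ k, K ≤ k → ∀ x ∈ S k, Tendsto (fun n => f n x) atTop (nhds (F x)) := by
    intro k hk x hx
    obtain ⟨l, hl⟩ := cauchySeq_tendsto_of_complete (hcs k hk x hx)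
    have hex : ∃ l, Tendsto (fun n => f n x) atTop (nhds l) := ⟨l, hl⟩
    have : F x = hex.choose := by simp only [hFdef, dif_pos hex]
    rw [this]
    exact hex.choose_spec
  have keyF : ∀ ε : ℝ, 0 < ε → ∃ N, ∀ m ≥ N, ∀ k, K ≤ k → ∀ x ∈ S k,
      |f m x - F x| ≤ ε * Cst k := by
    intro ε hε
    obtain ⟨N, hN⟩ := hcauchy' ε hε
    refine ⟨N, fun m hm k hk x hx => ?_⟩
    have hlim : Tendsto (fun n => |f m x - f n x|) atTop (nhds |f m x - F x|) :=
      (tendsto_const_nhds.sub (hFlim k hk x hx)).abs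
    refine le_of_tendsto hlim ?_
    filter_upwards [eventually_ge_atTop N] with n hn
    exact (key m n k hk x hx).trans
      (mul_le_mul_of_nonneg_right (hN m hm n hn) (hCst_pos k).le)
  have hFint : ∀ k, K ≤ k → IntegrableOn F (S k) volume := by
    intro k hk
    obtain ⟨N, hN⟩ := keyF 1 one_pos
    have haem : AEStronglyMeasurable F (volume.restrict (S k)) := by
      have h1 : ∀ n : ℕ, AEMeasurable (f n) (volume.restrict (S k)) :=
        fun n => (hintn n k hk).aemeasurable
      have h2 : ∀ᵐ x ∂(volume.restrict (S k)), Tendsto (fun n => f n x) atTop (nhds (F x)) :=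
        (ae_restrict_iff' (hSmeas k)).mpr (ae_of_all _ fun x hx => hFlim k hk x hx)
      exact (aemeasurable_of_tendsto_metrizable_ae (μ := volume.restrict (S k)) (g := F) atTop h1 h2).aestronglyMeasurable
    refine Integrable.mono' (g := fun x => |f N x| + 1 * Cst k)
      (((hintn N k hk).abs).add ((integrableOn_const_iff (C := 1 * Cst k)).mpr (Or.inr (hSfin k)))) haem ?_
    rw [ae_restrict_iff' (hSmeas k)]
    refine ae_of_all _ fun x hx => ?_
    have h1 := hN N le_rfl k hk x hx
    have h2 : |F x| - |f N x| ≤ |F x - f N x| := abs_sub_abs_le_abs_sub _ _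
    rw [abs_sub_comm] at h2
    have h3 : ‖F x‖ = |F x| := rfl
    rw [h3]
    linarith
  have hintdF : ∀ m k, K ≤ k → IntegrableOn (fun x => f m x - F x) (S k) volume :=
    fun m k hk => (hintn m k hk).sub (hFint k hk)
  have main : ∀ ε : ℝ, 0 < ε → ∃ N, ∀ m ≥ N,
      kdNorm α K δ (fun x => f m x - F x) ≤ ENNReal.ofReal ε := by
    intro ε hε
    obtain ⟨N, hN⟩ := hcauchy (ε/3) (by positivity)
    refine ⟨N, fun m hm => ?_⟩
    refine hkdle _ _ fun k hk => ?_
    have hevb : ∀ s : Set ℝ, s = R k ∨ s = L k →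
        eVariationOn (fun x => f m x - F x) s ≤
          ENNReal.ofReal (ε/3) / ENNReal.ofReal ((k:ℝ) ^ (-δ)) := by
      intro s hs
      have hssub : s ⊆ S k := by
        rcases hs with rfl | rfl
        exacts [subset_union_right, subset_union_left]
      refine evar_le_of_tendsto (G := fun n x => f m x - f n x) ?_ ?_
      · exact fun x hx => tendsto_const_nhds.sub (hFlim k hk x (hssub hx))
      · filter_upwards [eventually_ge_atTop N] with n hn
        obtain ⟨h1, h2, _⟩ := extract (fun x => f m x - f n x) k hk _
          ((hTle _ k hk).trans (hN m hm n hn))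
        rcases hs with rfl | rfl
        · exact h1
        · exact h2
    have hintb : ENNReal.ofReal (∫ x in S k, |f m x - F x|) ≤ ENNReal.ofReal (ε/3) := by
      refine ENNReal.ofReal_le_ofReal ?_
      refine le_of_forall_pos_le_add fun η hη => ?_
      set μt : ℝ := (volume (S k)).toReal with hμt
      have hμt0 : 0 ≤ μt := ENNReal.toReal_nonneg
      have hCk := hCst_pos k
      obtain ⟨N₂, hN₂⟩ := keyF (η / (Cst k * (μt + 1))) (by positivity)
      set n := max N N₂ with hndef
      have hn1 : N ≤ n := le_max_left _ _
      have hn2 : N₂ ≤ n := le_max_right _ _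
      have hi1 : (∫ x in S k, |f m x - f n x|) ≤ ε/3 := by
        obtain ⟨_, _, h3⟩ := extract (fun x => f m x - f n x) k hk _
          ((hTle _ k hk).trans (hN m hm n hn1))
        exact (ENNReal.ofReal_le_ofReal_iff (by positivity)).mp h3
      have hfnF : IntegrableOn (fun x => f n x - F x) (S k) volume :=
        (hintn n k hk).sub (hFint k hk)
      have hi2 : (∫ x in S k, |f n x - F x|) ≤ η := by
        have hb : ∀ x ∈ S k, |f n x - F x| ≤ η / (Cst k * (μt + 1)) * Cst k :=
          fun x hx => hN₂ n hn2 k hk x hx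
        have hc : (∫ x in S k, |f n x - F x|) ≤
            ∫ _ in S k, η / (Cst k * (μt + 1)) * Cst k ∂volume := by
          refine setIntegral_mono_on hfnF.abs
            ((integrableOn_const_iff (C := η / (Cst k * (μt + 1)) * Cst k)).mpr (Or.inr (hSfin k)))
            (hSmeas k) hb
        have hd : (∫ _ in S k, η / (Cst k * (μt + 1)) * Cst k ∂volume) =
            μt * (η / (Cst k * (μt + 1)) * Cst k) := by
          rw [setIntegral_const, smul_eq_mul]
          rfl
        have heq2 : η / (Cst k * (μt + 1)) * Cst k = η / (μt + 1) := by
          field_simp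
        have he : μt * (η / (Cst k * (μt + 1)) * Cst k) ≤ η := by
          rw [heq2, mul_comm, div_mul_eq_mul_div]
          refine (div_le_iff₀ (by linarith)).mpr ?_
          nlinarith
        linarith [hc.trans (le_of_eq hd)]
      have htri : (∫ x in S k, |f m x - F x|) ≤
          (∫ x in S k, |f m x - f n x|) + ∫ x in S k, |f n x - F x| := by
        rw [← integral_add (hintd m n k hk).abs hfnF.abs]
        refine integral_mono (hintdF m k hk).abs
          ((hintd m n k hk).abs.add hfnF.abs) fun x => ?_
        have hxx : f m x - F x = (f m x - f n x) + (f n x - F x) := by ring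
        simp only [Pi.add_apply]
        rw [hxx]
        exact abs_add_le _ _
      linarith
    have hE1 := hevb (R k) (Or.inl rfl)
    have hE2 := hevb (L k) (Or.inr rfl)
    calc T (fun x => f m x - F x) k
        ≤ ENNReal.ofReal ((k:ℝ) ^ (-δ)) *
            (ENNReal.ofReal (ε/3) / ENNReal.ofReal ((k:ℝ) ^ (-δ)) +
              ENNReal.ofReal (ε/3) / ENNReal.ofReal ((k:ℝ) ^ (-δ))) + ENNReal.ofReal (ε/3) := by
          show ENNReal.ofReal ((k:ℝ) ^ (-δ)) *
              (eVariationOn (fun x => f m x - F x) (R k) +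
                eVariationOn (fun x => f m x - F x) (L k)) +
              ENNReal.ofReal (∫ x in S k, |f m x - F x|) ≤ _
          gcongr
      _ = ENNReal.ofReal (ε/3) + ENNReal.ofReal (ε/3) + ENNReal.ofReal (ε/3) := by
          rw [mul_add, ENNReal.mul_div_cancel (hck0 k hk) (hcktop k)]
      _ = ENNReal.ofReal ε := by
          rw [← ENNReal.ofReal_add (by positivity) (by positivity),
            ← ENNReal.ofReal_add (by positivity) (by positivity)]
          congr 1
          ring
  refine ⟨F, ?_, ?_⟩
  · obtain ⟨N, hN⟩ := main 1 one_pos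
    have h1 : kdNorm α K δ (fun x => f N x - F x) ≤ ENNReal.ofReal 1 := hN N le_rfl
    have h2 : kdNorm α K δ F ≤ kdNorm α K δ (f N) + kdNorm α K δ (fun x => f N x - F x) := by
      refine hkdle _ _ fun k hk => ?_
      have heq : (fun x => f N x - (f N x - F x)) = F := by funext x; ring
      have ht := Tsub (f N) (fun x => f N x - F x) k (hintn N k hk) (hintdF N k hk)
      rw [heq] at ht
      exact ht.trans (add_le_add (hTle _ k hk) (hTle _ k hk))
    exact lt_of_le_of_lt h2 (ENNReal.add_lt_top.mpr
      ⟨hfin N, lt_of_le_of_lt h1 ENNReal.ofReal_lt_top⟩)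
  · rw [ENNReal.tendsto_atTop_zero]
    intro ε hε
    rcases eq_or_ne ε ⊤ with rfl | hεtop
    · exact ⟨0, fun n _ => le_top⟩
    · obtain ⟨N, hN⟩ := main ε.toReal (ENNReal.toReal_pos hε.ne' hεtop)
      exact ⟨N, fun n hn => (hN n hn).trans (le_of_eq (ENNReal.ofReal_toReal hεtop))⟩
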